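/- Let R be a commutative ring, V an R-module with a quadratic form Q₂ : QuadraticForm R V, let α, β, γ : R, and let Q₁ : QuadraticForm R (R × R) be a binary quadratic form with Q₁ (1,0) = α, Q₁ (0,1) = γ, and Q₁ (1,1) = α + β + γ. Set δ := β^2 - 4*α*γ and assume IsUnit δ. Then there exists an R-algebra isomorphism CliffordAlgebra (Q₁.prod Q₂) ≃ₐ[R] TensorProduct R (CliffordAlgebra Q₁) (CliffordAlgebra (δ • Q₂)), where the tensor product is the ordinary (ungraded) tensor product of R-algebras. -/

import Mathlib

section aux
variable {R A : Type*} [CommRing R] [Ring A] [Algebra R A]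

lemma cda_omega_sq (α β γ : R) (a b : A) (ha : a * a = algebraMap R A α)
    (hb : b * b = algebraMap R A γ) (hab : a * b + b * a = algebraMap R A β) :
    (2 * (a * b) - algebraMap R A β) * (2 * (a * b) - algebraMap R A β)
      = algebraMap R A (β ^ 2 - 4 * α * γ) := by
  have hba : b * a = algebraMap R A β - a * b := eq_sub_of_add_eq' hab
  have h1 : a * b * (a * b) = algebraMap R A β * (a * b) - algebraMap R A (α * γ) := by
    have e : a * b * (a * b) = a * (b * a) * b := by noncomm_ring
    rw [e, hba, mul_sub, sub_mul, ← Algebra.commutes β a,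
      show a * (a * b) * b = a * a * (b * b) by noncomm_ring, ha, hb, ← map_mul, mul_assoc]
  have hc : algebraMap R A (β ^ 2 - 4 * α * γ)
      = algebraMap R A β * algebraMap R A β - 4 * algebraMap R A (α * γ) := by
    rw [map_sub, pow_two, map_mul]
    congr 1
    rw [show 4 * α * γ = (4:R) * (α * γ) by ring, map_mul, map_ofNat]
  have expand : (2 * (a * b) - algebraMap R A β) * (2 * (a * b) - algebraMap R A β)
      = 4 * (a * b * (a * b)) - 2 * ((a * b) * algebraMap R A β)
        - algebraMap R A β * (2 * (a * b)) + algebraMap R A β * algebraMap R A β := by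
    noncomm_ring
  rw [expand, h1, hc, ← Algebra.commutes β (a * b)]
  noncomm_ring

lemma cda_omega_anticomm_a (α β : R) (a b : A) (ha : a * a = algebraMap R A α)
    (hab : a * b + b * a = algebraMap R A β) :
    (2 * (a * b) - algebraMap R A β) * a + a * (2 * (a * b) - algebraMap R A β) = 0 := by
  have hba : b * a = algebraMap R A β - a * b := eq_sub_of_add_eq' hab
  have h2 : a * b * a = algebraMap R A β * a - algebraMap R A α * b := by
    rw [mul_assoc, hba, mul_sub, ← Algebra.commutes β a, ← mul_assoc, ha]
  have h3 : a * (a * b) = algebraMap R A α * b := by rw [← mul_assoc, ha]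
  have e : (2 * (a * b) - algebraMap R A β) * a + a * (2 * (a * b) - algebraMap R A β)
      = 2 * (a * b * a) + 2 * (a * (a * b)) - algebraMap R A β * a - a * algebraMap R A β := by
    noncomm_ring
  rw [e, h2, h3, ← Algebra.commutes β a]
  noncomm_ring

lemma cda_omega_anticomm_b (β γ : R) (a b : A) (hb : b * b = algebraMap R A γ)
    (hab : a * b + b * a = algebraMap R A β) :
    (2 * (a * b) - algebraMap R A β) * b + b * (2 * (a * b) - algebraMap R A β) = 0 := by
  have hba : b * a = algebraMap R A β - a * b := eq_sub_of_add_eq' hab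
  have h2 : b * (a * b) = algebraMap R A β * b - algebraMap R A γ * a := by
    rw [← mul_assoc, hba, sub_mul, mul_assoc, hb, ← Algebra.commutes γ a]
  have h3 : a * b * b = algebraMap R A γ * a := by
    rw [mul_assoc, hb, ← Algebra.commutes γ a]
  have e : (2 * (a * b) - algebraMap R A β) * b + b * (2 * (a * b) - algebraMap R A β)
      = 2 * (a * b * b) + 2 * (b * (a * b)) - algebraMap R A β * b - b * algebraMap R A β := by
    noncomm_ring
  rw [e, h2, h3, ← Algebra.commutes β b]
  noncomm_ring

lemma cda_omega_comm (β : R) (a b c : A)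
    (hac : a * c + c * a = 0) (hbc : b * c + c * b = 0) :
    (2 * (a * b) - algebraMap R A β) * c = c * (2 * (a * b) - algebraMap R A β) := by
  have hac' : a * c = -(c * a) := eq_neg_of_add_eq_zero_left hac
  have hbc' : b * c = -(c * b) := eq_neg_of_add_eq_zero_left hbc
  have h1 : a * b * c = c * (a * b) := by
    rw [mul_assoc, hbc', mul_neg, ← mul_assoc, hac', neg_mul, neg_neg, mul_assoc]
  have h2 : 2 * (a * b) * c = c * (2 * (a * b)) := by
    rw [mul_assoc, h1, ← mul_assoc, ← mul_assoc, (Commute.ofNat_left 2 c).eq]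
    noncomm_ring
  rw [sub_mul, mul_sub, ← Algebra.commutes β c, h2]

end aux

set_option maxHeartbeats 1000000 in
open CliffordAlgebra TensorProduct in
theorem clifford_decomposition_lemma {R V : Type*} [CommRing R] [AddCommGroup V] [Module R V]
    (Q₂ : QuadraticForm R V) (α β γ : R)
    (Q₁ : QuadraticForm R (R × R))
    (h10 : Q₁ (1, 0) = α) (h01 : Q₁ (0, 1) = γ) (h11 : Q₁ (1, 1) = α + β + γ)
    (hδ : IsUnit (β ^ 2 - 4 * α * γ)) :
    Nonempty (CliffordAlgebra (Q₁.prod Q₂) ≃ₐ[R]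
      TensorProduct R (CliffordAlgebra Q₁) (CliffordAlgebra ((β ^ 2 - 4 * α * γ) • Q₂))) := by
  set δ : R := β ^ 2 - 4 * α * γ with hδdef
  set c : R := ↑hδ.unit⁻¹ with hcdef
  have hcδ : c * δ = 1 := hδ.val_inv_mul
  set Qp : QuadraticForm R ((R × R) × V) := Q₁.prod Q₂ with hQpdef
  set Q₂' : QuadraticForm R V := δ • Q₂ with hQ₂'def
  set A₁ := CliffordAlgebra Q₁
  set A₂ := CliffordAlgebra Q₂'
  set Ap := CliffordAlgebra Qp
  -- generators of the rank 2 part in A₁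
  set a : A₁ := ι Q₁ ((1:R), (0:R)) with hadef
  set b : A₁ := ι Q₁ ((0:R), (1:R)) with hbdef
  have ha : a * a = algebraMap R A₁ α := by rw [hadef, ι_sq_scalar, h10]
  have hb : b * b = algebraMap R A₁ γ := by rw [hbdef, ι_sq_scalar, h01]
  have hpolar : QuadraticMap.polar Q₁ ((1:R), (0:R)) ((0:R), (1:R)) = β := by
    simp only [QuadraticMap.polar, Prod.mk_add_mk, add_zero, zero_add, h10, h01, h11]
    ring
  have hab : a * b + b * a = algebraMap R A₁ β := by
    rw [hadef, hbdef, ι_mul_ι_add_swap, hpolar]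
  set ω : A₁ := 2 * (a * b) - algebraMap R A₁ β with hωdef
  have hω2 : ω * ω = algebraMap R A₁ δ := cda_omega_sq α β γ a b ha hb hab
  have hωanti : ∀ m : R × R, ω * ι Q₁ m + ι Q₁ m * ω = 0 := by
    intro m
    have hm : m = m.1 • ((1:R), (0:R)) + m.2 • ((0:R), (1:R)) := by
      ext <;> simp
    rw [hm, map_add, _root_.map_smul, _root_.map_smul, ← hadef, ← hbdef,
      mul_add, add_mul, mul_smul_comm, mul_smul_comm, smul_mul_assoc, smul_mul_assoc,
      add_add_add_comm, ← smul_add, ← smul_add,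
      cda_omega_anticomm_a α β a b ha hab, cda_omega_anticomm_b β γ a b hb hab,
      smul_zero, smul_zero, add_zero]
  -- generators in Ap
  set a' : Ap := ι Qp (((1:R), (0:R)), (0:V)) with ha'def
  set b' : Ap := ι Qp (((0:R), (1:R)), (0:V)) with hb'def
  have hQpapp : ∀ m : (R × R) × V, Qp m = Q₁ m.1 + Q₂ m.2 :=
    fun m => QuadraticMap.prod_apply Q₁ Q₂ m
  have hpolarp : ∀ x y : (R × R) × V, QuadraticMap.polar Qp x y
      = QuadraticMap.polar Q₁ x.1 y.1 + QuadraticMap.polar Q₂ x.2 y.2 :=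
    fun x y => QuadraticMap.polar_prod Q₁ Q₂ x y
  have hQpu : ∀ u : R × R, Qp (u, (0:V)) = Q₁ u := by
    intro u; rw [hQpapp, map_zero, add_zero]
  have hQpv : ∀ v : V, Qp ((0:R × R), v) = Q₂ v := by
    intro v; rw [hQpapp, map_zero, zero_add]
  have hQ₂'app : ∀ v : V, Q₂' v = δ * Q₂ v := by
    intro v; rw [hQ₂'def, QuadraticMap.smul_apply, smul_eq_mul]
  have ha' : a' * a' = algebraMap R Ap α := by rw [ha'def, ι_sq_scalar, hQpu, h10]
  have hb' : b' * b' = algebraMap R Ap γ := by rw [hb'def, ι_sq_scalar, hQpu, h01]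
  have hab' : a' * b' + b' * a' = algebraMap R Ap β := by
    rw [ha'def, hb'def, ι_mul_ι_add_swap, hpolarp,
      QuadraticMap.polar_zero_left, add_zero, hpolar]
  set ω' : Ap := 2 * (a' * b') - algebraMap R Ap β with hω'def
  have hω'2 : ω' * ω' = algebraMap R Ap δ := cda_omega_sq α β γ a' b' ha' hb' hab'
  have hω'anti : ∀ u : R × R, ω' * ι Qp (u, (0:V)) + ι Qp (u, (0:V)) * ω' = 0 := by
    intro u
    have hm : (u, (0:V)) = u.1 • (((1:R), (0:R)), (0:V)) + u.2 • (((0:R), (1:R)), (0:V)) := by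
      ext <;> simp
    rw [hm, map_add, _root_.map_smul, _root_.map_smul, ← ha'def, ← hb'def,
      mul_add, add_mul, mul_smul_comm, mul_smul_comm, smul_mul_assoc, smul_mul_assoc,
      add_add_add_comm, ← smul_add, ← smul_add,
      cda_omega_anticomm_a α β a' b' ha' hab', cda_omega_anticomm_b β γ a' b' hb' hab',
      smul_zero, smul_zero, add_zero]
  have hcross : ∀ (u : R × R) (v : V),
      ι Qp (u, (0:V)) * ι Qp ((0:R × R), v) + ι Qp ((0:R × R), v) * ι Qp (u, (0:V)) = 0 := by
    intro u v
    rw [ι_mul_ι_add_swap, hpolarp, QuadraticMap.polar_zero_right,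
      QuadraticMap.polar_zero_left, add_zero, map_zero]
  have hω'comm : ∀ v : V, ω' * ι Qp ((0:R × R), v) = ι Qp ((0:R × R), v) * ω' :=
    fun v => cda_omega_comm β a' b' _ (hcross _ v) (hcross _ v)
  -- the forward linear map
  set L : (R × R) × V →ₗ[R] A₁ ⊗[R] A₂ :=
    (((TensorProduct.mk R A₁ A₂).flip 1).comp ((ι Q₁).comp (LinearMap.fst R (R × R) V)))
    + c • ((TensorProduct.mk R A₁ A₂ ω).comp ((ι Q₂').comp (LinearMap.snd R (R × R) V)))
    with hLdef
  have hL : ∀ m : (R × R) × V,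
      L m = ι Q₁ m.1 ⊗ₜ[R] (1:A₂) + c • (ω ⊗ₜ[R] ι Q₂' m.2) := fun m => rfl
  have hcond : ∀ m : (R × R) × V, L m * L m = algebraMap R (A₁ ⊗[R] A₂) (Qp m) := by
    intro m
    rw [hL]
    set x : A₁ ⊗[R] A₂ := ι Q₁ m.1 ⊗ₜ[R] (1:A₂) with hx
    set y : A₁ ⊗[R] A₂ := ω ⊗ₜ[R] ι Q₂' m.2 with hy
    have hxx : x * x = algebraMap R _ (Q₁ m.1) := by
      rw [hx, Algebra.TensorProduct.tmul_mul_tmul, ι_sq_scalar, mul_one,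
        Algebra.TensorProduct.algebraMap_apply]
    have hxy : x * y + y * x = 0 := by
      rw [hx, hy, Algebra.TensorProduct.tmul_mul_tmul, Algebra.TensorProduct.tmul_mul_tmul,
        one_mul, mul_one, ← add_tmul, add_comm (ι Q₁ m.1 * ω), hωanti, zero_tmul]
    have hyy : y * y = (δ * (δ * Q₂ m.2)) • (1 : A₁ ⊗[R] A₂) := by
      rw [hy, Algebra.TensorProduct.tmul_mul_tmul, hω2, ι_sq_scalar, hQ₂'app,
        Algebra.algebraMap_eq_smul_one,
        Algebra.algebraMap_eq_smul_one, ← smul_tmul', tmul_smul, smul_smul,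
        Algebra.TensorProduct.one_def]
    have expand : (x + c • y) * (x + c • y)
        = x * x + c • (x * y + y * x) + (c * c) • (y * y) := by
      rw [add_mul, mul_add, mul_add, smul_mul_assoc, mul_smul_comm, smul_mul_smul_comm,
        smul_add]
      abel
    rw [expand, hxx, hxy, hyy, smul_zero, add_zero, smul_smul,
      show c * c * (δ * (δ * Q₂ m.2)) = (c * δ) * ((c * δ) * Q₂ m.2) by ring, hcδ,
      one_mul, one_mul, hQpapp, map_add,
      Algebra.algebraMap_eq_smul_one (A := A₁ ⊗[R] A₂) (r := Q₂ m.2)]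
  set f : Ap →ₐ[R] A₁ ⊗[R] A₂ := CliffordAlgebra.lift Qp ⟨L, hcond⟩ with hfdef
  have hfι : ∀ m : (R × R) × V,
      f (ι Qp m) = ι Q₁ m.1 ⊗ₜ[R] (1:A₂) + c • (ω ⊗ₜ[R] ι Q₂' m.2) := by
    intro m; rw [hfdef, CliffordAlgebra.lift_ι_apply]; exact hL m
  -- the two backward maps
  set g₁ : A₁ →ₐ[R] Ap := CliffordAlgebra.lift Q₁
    ⟨(ι Qp).comp (LinearMap.inl R (R × R) V), by
      intro u
      rw [LinearMap.comp_apply, LinearMap.inl_apply, ι_sq_scalar, hQpu]⟩ with hg₁def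
  have hg₁ι : ∀ u : R × R, g₁ (ι Q₁ u) = ι Qp (u, (0:V)) := by
    intro u; rw [hg₁def, CliffordAlgebra.lift_ι_apply]; rfl
  set g₂ : A₂ →ₐ[R] Ap := CliffordAlgebra.lift Q₂'
    ⟨(LinearMap.mulLeft R ω').comp ((ι Qp).comp (LinearMap.inr R (R × R) V)), by
      intro v
      simp only [LinearMap.comp_apply, LinearMap.mulLeft_apply, LinearMap.inr_apply]
      rw [(show Commute (ι Qp ((0:R × R), v)) ω' from (hω'comm v).symm).mul_mul_mul_comm,
        hω'2, ι_sq_scalar, hQpv, ← map_mul, hQ₂'app]⟩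
    with hg₂def
  have hg₂ι : ∀ v : V, g₂ (ι Q₂' v) = ω' * ι Qp ((0:R × R), v) := by
    intro v; rw [hg₂def, CliffordAlgebra.lift_ι_apply]; rfl
  have keycomm : ∀ (u : R × R) (v : V),
      Commute (ι Qp (u, (0:V))) (ω' * ι Qp ((0:R × R), v)) := by
    intro u v
    have hu1 : ι Qp (u, (0:V)) * ω' = -(ω' * ι Qp (u, (0:V))) :=
      eq_neg_of_add_eq_zero_right (hω'anti u)
    have hu2 : ι Qp (u, (0:V)) * ι Qp ((0:R × R), v)
        = -(ι Qp ((0:R × R), v) * ι Qp (u, (0:V))) :=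
      eq_neg_of_add_eq_zero_left (hcross u v)
    show ι Qp (u, (0:V)) * (ω' * ι Qp ((0:R × R), v))
        = ω' * ι Qp ((0:R × R), v) * ι Qp (u, (0:V))
    rw [← mul_assoc, hu1, neg_mul, mul_assoc, hu2, mul_neg, neg_neg, ← mul_assoc]
  have hcomm : ∀ (x : A₁) (y : A₂), Commute (g₁ x) (g₂ y) := by
    intro x y
    induction x using CliffordAlgebra.induction with
    | algebraMap r => rw [AlgHom.commutes]; exact Algebra.commute_algebraMap_left r _
    | ι u =>
      induction y using CliffordAlgebra.induction with
      | algebraMap r => rw [AlgHom.commutes]; exact (Algebra.commute_algebraMap_left r _).symm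
      | ι v => rw [hg₁ι u, hg₂ι v]; exact keycomm u v
      | mul y₁ y₂ h₁ h₂ => rw [map_mul]; exact h₁.mul_right h₂
      | add y₁ y₂ h₁ h₂ => rw [map_add]; exact h₁.add_right h₂
    | mul x₁ x₂ h₁ h₂ => rw [map_mul]; exact h₁.mul_left h₂
    | add x₁ x₂ h₁ h₂ => rw [map_add]; exact h₁.add_left h₂
  set g : A₁ ⊗[R] A₂ →ₐ[R] Ap := Algebra.TensorProduct.lift g₁ g₂ hcomm with hgdef
  have hgtmul : ∀ (x : A₁) (y : A₂), g (x ⊗ₜ[R] y) = g₁ x * g₂ y := by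
    intro x y; rw [hgdef]; exact Algebra.TensorProduct.lift_tmul _ _ _ _ _
  have hg₁ω : g₁ ω = ω' := by
    rw [hωdef, map_sub, map_mul, map_ofNat, map_mul, hg₁ι, hg₁ι, AlgHom.commutes,
      ← ha'def, ← hb'def, hω'def]
  -- g ∘ f = id
  have hgf : g.comp f = AlgHom.id R Ap := by
    apply CliffordAlgebra.hom_ext
    apply LinearMap.ext
    intro m
    simp only [LinearMap.comp_apply, AlgHom.toLinearMap_apply, AlgHom.comp_apply,
      AlgHom.coe_id, id_eq]
    rw [hfι, map_add, map_smul, hgtmul, hgtmul, map_one, mul_one, hg₁ι, hg₁ω, hg₂ι,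
      ← mul_assoc, hω'2, ← Algebra.smul_def, smul_smul, hcδ, one_smul, ← map_add]
    refine congrArg (ι Qp) ?_
    ext <;> simp
  -- f ∘ g = id
  have hfa' : f a' = a ⊗ₜ[R] (1:A₂) := by
    rw [ha'def, hfι, map_zero, tmul_zero, smul_zero, add_zero, hadef]
  have hfb' : f b' = b ⊗ₜ[R] (1:A₂) := by
    rw [hb'def, hfι, map_zero, tmul_zero, smul_zero, add_zero, hbdef]
  have hfω' : f ω' = ω ⊗ₜ[R] (1:A₂) := by
    rw [hω'def, map_sub, map_mul, map_ofNat, map_mul, hfa', hfb', AlgHom.commutes,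
      Algebra.TensorProduct.tmul_mul_tmul, mul_one, hωdef,
      Algebra.TensorProduct.algebraMap_apply, sub_tmul]
    congr 1
    rw [two_mul, two_mul, ← add_tmul]
  have hfg : f.comp g = AlgHom.id R (A₁ ⊗[R] A₂) := by
    apply Algebra.TensorProduct.ext
    · apply CliffordAlgebra.hom_ext
      apply LinearMap.ext
      intro u
      simp only [LinearMap.comp_apply, AlgHom.toLinearMap_apply, AlgHom.comp_apply,
        AlgHom.coe_id, id_eq, Algebra.TensorProduct.includeLeft_apply]
      rw [hgtmul, map_one, mul_one, hg₁ι, hfι]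
      simp only [map_zero, tmul_zero, smul_zero, add_zero]
    · apply CliffordAlgebra.hom_ext
      apply LinearMap.ext
      intro v
      simp only [LinearMap.comp_apply, AlgHom.toLinearMap_apply, AlgHom.comp_apply,
        AlgHom.coe_id, id_eq, Algebra.TensorProduct.includeRight_apply,
        AlgHom.restrictScalars_apply]
      rw [hgtmul, map_one, one_mul, hg₂ι, map_mul, hfω', hfι,
        map_zero, zero_tmul, zero_add, mul_smul_comm,
        Algebra.TensorProduct.tmul_mul_tmul, one_mul, hω2,
        Algebra.algebraMap_eq_smul_one, smul_tmul', smul_smul, hcδ, one_smul]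
  exact ⟨AlgEquiv.ofAlgHom f g hfg hgf⟩
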